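/- Let E and F be nonempty closed convex sets in a real Hilbert space H. The following are equivalent: (a) every vector u ∈ H satisfies u = p_E(u) + p_F(u); (b) E and F are polar cones of each other, i.e., E = F° and F = E°. -/
import Mathlib


open RealInnerProductSpace Pointwise

/-- The (negative) polar set of `X`. -/
def polarSet {H : Type*} [NormedAddCommGroup H] [InnerProductSpace ℝ H] (X : Set H) : Set H :=
  {x | ∀ e ∈ X, ⟪x, e⟫ ≤ 0}

/-- `y` is the metric projection of `u` on `E`: it belongs to `E` and is nearest to `u`. -/
def IsMetricProj {H : Type*} [NormedAddCommGroup H] [InnerProductSpace ℝ H]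
    (E : Set H) (u y : H) : Prop :=
  y ∈ E ∧ ∀ x ∈ E, ‖u - y‖ ≤ ‖u - x‖

section Aux

variable {H : Type*} [NormedAddCommGroup H] [InnerProductSpace ℝ H]

lemma isMetricProj_iff_inner {K : Set H} (hK : Convex ℝ K) {u v : H} (hv : v ∈ K) :
    IsMetricProj K u v ↔ ∀ x ∈ K, ⟪u - v, x - v⟫ ≤ 0 := by
  letI : Nonempty K := ⟨⟨v, hv⟩⟩
  have hbdd : BddBelow (Set.range fun w : K => ‖u - w‖) :=
    ⟨0, fun y hy => by obtain ⟨w, rfl⟩ := hy; exact norm_nonneg _⟩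
  rw [← norm_eq_iInf_iff_real_inner_le_zero hK hv]
  constructor
  · intro h
    exact le_antisymm (le_ciInf fun w => h.2 w w.2) (ciInf_le hbdd ⟨v, hv⟩)
  · intro h
    refine ⟨hv, fun x hx => ?_⟩
    calc ‖u - v‖ = ⨅ w : K, ‖u - w‖ := h
    _ ≤ ‖u - x‖ := ciInf_le hbdd ⟨x, hx⟩

lemma metricProj_unique {K : Set H} {u v w : H}
    (hv : v ∈ K) (hw : w ∈ K)
    (h1 : ∀ x ∈ K, ⟪u - v, x - v⟫ ≤ 0) (h2 : ∀ x ∈ K, ⟪u - w, x - w⟫ ≤ 0) :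
    v = w := by
  have a := h1 w hw
  have b := h2 v hv
  have hvw : ⟪u - w, v - w⟫ = -⟪u - w, w - v⟫ := by
    rw [← inner_neg_right]; congr 1; abel
  rw [hvw] at b
  have key : ‖w - v‖ ^ 2 ≤ 0 := by
    have h3 : ⟪w - v, w - v⟫ = ⟪u - v, w - v⟫ - ⟪u - w, w - v⟫ := by
      rw [← inner_sub_left]; congr 1; abel
    rw [← real_inner_self_eq_norm_sq, h3]
    linarith
  have hnorm : ‖w - v‖ = 0 := by nlinarith [norm_nonneg (w - v)]
  exact (norm_sub_eq_zero_iff.mp hnorm).symm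

lemma exists_isMetricProj {K : Set H} [CompleteSpace H] (hne : K.Nonempty) (hcl : IsClosed K)
    (hconv : Convex ℝ K) (u : H) : ∃ v, IsMetricProj K u v := by
  obtain ⟨v, hv, heq⟩ :=
    exists_norm_eq_iInf_of_complete_convex hne (hcl.isComplete) hconv u
  refine ⟨v, hv, fun x hx => ?_⟩
  letI : Nonempty K := ⟨⟨v, hv⟩⟩
  have hbdd : BddBelow (Set.range fun w : K => ‖u - w‖) :=
    ⟨0, fun y hy => by obtain ⟨w, rfl⟩ := hy; exact norm_nonneg _⟩
  calc ‖u - v‖ = ⨅ w : K, ‖u - w‖ := heq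
  _ ≤ ‖u - x‖ := ciInf_le hbdd ⟨x, hx⟩

end Aux

theorem decomposition_characterizes_polar_cones
    {H : Type*} [NormedAddCommGroup H] [InnerProductSpace ℝ H] [CompleteSpace H]
    (E F : Set H) (hEne : E.Nonempty) (hEcl : IsClosed E) (hEconv : Convex ℝ E)
    (hFne : F.Nonempty) (hFcl : IsClosed F) (hFconv : Convex ℝ F) :
    (∀ u y z : H, IsMetricProj E u y → IsMetricProj F u z → u = y + z) ↔
      (E = polarSet F ∧ F = polarSet E) := by
  constructor
  · intro hdec
    have self_proj : ∀ (K : Set H) (u : H), u ∈ K → IsMetricProj K u u :=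
      fun K u hu => ⟨hu, fun x hx => by simp⟩
    have key : ∀ u ∈ E, IsMetricProj F u 0 := by
      intro u hu
      obtain ⟨z, hz⟩ := exists_isMetricProj hFne hFcl hFconv u
      have h := hdec u u z (self_proj E u hu) hz
      have hz0 : z = 0 := by
        have h' : u + z = u + 0 := by rw [← h]; simp
        exact add_left_cancel h'
      rwa [hz0] at hz
    have key' : ∀ u ∈ F, IsMetricProj E u 0 := by
      intro u hu
      obtain ⟨y, hy⟩ := exists_isMetricProj hEne hEcl hEconv u
      have h := hdec u y u hy (self_proj F u hu)
      have hy0 : y = 0 := by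
        have h' : y + u = 0 + u := by rw [← h]; simp
        exact add_right_cancel h'
      rwa [hy0] at hy
    have hEsub : E ⊆ polarSet F := by
      intro u hu x hx
      have := ((isMetricProj_iff_inner hFconv (key u hu).1).mp (key u hu)) x hx
      simpa using this
    have hFsub : F ⊆ polarSet E := by
      intro u hu x hx
      have := ((isMetricProj_iff_inner hEconv (key' u hu).1).mp (key' u hu)) x hx
      simpa using this
    obtain ⟨e0, he0⟩ := id hEne
    have h0F : (0 : H) ∈ F := (key e0 he0).1
    obtain ⟨f0, hf0⟩ := id hFne
    have h0E : (0 : H) ∈ E := (key' f0 hf0).1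
    constructor
    · refine Set.Subset.antisymm hEsub ?_
      intro u hu
      obtain ⟨y, hy⟩ := exists_isMetricProj hEne hEcl hEconv u
      obtain ⟨z, hz⟩ := exists_isMetricProj hFne hFcl hFconv u
      have hdecu := hdec u y z hy hz
      have charF := (isMetricProj_iff_inner hFconv hz.1).mp hz 0 h0F
      have h2 : ⟪u, z⟫ ≤ 0 := hu z hz.1
      have expand : ⟪u - z, 0 - z⟫ = ‖z‖ ^ 2 - ⟪u, z⟫ := by
        rw [inner_sub_left, inner_sub_right, inner_sub_right,
          real_inner_self_eq_norm_sq, inner_zero_right, inner_zero_right]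
        ring
      have h3 : ‖z‖ ^ 2 ≤ 0 := by
        rw [expand] at charF; linarith
      have hz0 : z = 0 := by
        have : ‖z‖ = 0 := by nlinarith [norm_nonneg z]
        simpa using this
      rw [hz0, add_zero] at hdecu
      rw [hdecu]; exact hy.1
    · refine Set.Subset.antisymm hFsub ?_
      intro u hu
      obtain ⟨y, hy⟩ := exists_isMetricProj hEne hEcl hEconv u
      obtain ⟨z, hz⟩ := exists_isMetricProj hFne hFcl hFconv u
      have hdecu := hdec u y z hy hz
      have charE := (isMetricProj_iff_inner hEconv hy.1).mp hy 0 h0E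
      have h2 : ⟪u, y⟫ ≤ 0 := hu y hy.1
      have expand : ⟪u - y, 0 - y⟫ = ‖y‖ ^ 2 - ⟪u, y⟫ := by
        rw [inner_sub_left, inner_sub_right, inner_sub_right,
          real_inner_self_eq_norm_sq, inner_zero_right, inner_zero_right]
        ring
      have h3 : ‖y‖ ^ 2 ≤ 0 := by
        rw [expand] at charE; linarith
      have hy0 : y = 0 := by
        have : ‖y‖ = 0 := by nlinarith [norm_nonneg y]
        simpa using this
      rw [hy0, zero_add] at hdecu
      rw [hdecu]; exact hz.1
  · rintro ⟨hEp, hFp⟩ u y z hy hz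
    have hyE := hy.1
    have hyP : y ∈ polarSet F := hEp ▸ hyE
    have chE := (isMetricProj_iff_inner hEconv hyE).mp hy
    have h0E : (0 : H) ∈ E := by
      rw [hEp]; intro x hx; simp
    have h2y : (2 : ℝ) • y ∈ E := by
      rw [hEp]; intro x hx
      have := hyP x hx
      rw [real_inner_smul_left]; linarith
    have e1 := chE 0 h0E
    have e2 := chE ((2 : ℝ) • y) h2y
    have a : ⟪u - y, (0 : H) - y⟫ = -⟪u - y, y⟫ := by
      rw [zero_sub, inner_neg_right]
    have b : ⟪u - y, (2 : ℝ) • y - y⟫ = ⟪u - y, y⟫ := by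
      congr 1
      rw [two_smul]; abel
    rw [a] at e1; rw [b] at e2
    have horth : ⟪u - y, y⟫ = 0 := le_antisymm e2 (by linarith)
    have huyF : u - y ∈ F := by
      rw [hFp]; intro x hx
      have hx' := chE x hx
      have hsplit : ⟪u - y, x⟫ = ⟪u - y, x - y⟫ + ⟪u - y, y⟫ := by
        rw [← inner_add_right]; congr 1; abel
      rw [hsplit, horth, add_zero]; exact hx'
    have chF' : ∀ x ∈ F, ⟪u - (u - y), x - (u - y)⟫ ≤ 0 := by
      intro x hx
      have hyx : ⟪y, x⟫ ≤ 0 := hyP x hx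
      have huy : u - (u - y) = y := by abel
      rw [huy, inner_sub_right]
      have h2 : ⟪y, u - y⟫ = 0 := by rw [real_inner_comm]; exact horth
      linarith
    have chF := (isMetricProj_iff_inner hFconv hz.1).mp hz
    have hzeq := metricProj_unique hz.1 huyF chF chF'
    rw [hzeq]; abel
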